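/- If k is a C² solution of the kernel equation on D, then |k(x,y)| ≤ M·e^{2M} for all (x,y) ∈ D, where M := (f̄ + Λ̄)/2. -/

import Mathlib

open MeasureTheory Set
open scoped ENNReal

noncomputable section

/-- The triangular domain `D = {(x,y) : 0 ≤ y ≤ x ≤ 1}`. -/
def Dset : Set (ℝ × ℝ) := {p : ℝ × ℝ | 0 ≤ p.2 ∧ p.2 ≤ p.1 ∧ p.1 ≤ 1}

/-- Partial derivative in the first variable (within `D`). -/
def pd1 (K : ℝ × ℝ → ℝ) (p : ℝ × ℝ) : ℝ := fderivWithin ℝ K Dset p (1, 0)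

/-- Partial derivative in the second variable (within `D`). -/
def pd2 (K : ℝ × ℝ → ℝ) (p : ℝ × ℝ) : ℝ := fderivWithin ℝ K Dset p (0, 1)

/-- `K` is a `C²` solution of the kernel equation on `D`:
(i) `k_xx - k_yy = μ k + f + ∫_y^x k(x,z) f(z,y) dz` on `D`;
(ii) `k_x(x,x) + k_y(x,x) = λ0/2`; (iii) `k_y(x,0) = 0`; (iv) `k(0,0) = 0`. -/
def IsKernelSol (lam0 : ℝ) (c1 : ℝ → ℝ) (f : ℝ → ℝ → ℝ) (K : ℝ × ℝ → ℝ) : Prop :=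
  ContDiffOn ℝ 2 K Dset ∧
  (∀ p ∈ Dset, pd1 (pd1 K) p - pd2 (pd2 K) p =
      (lam0 - c1 p.1 + c1 p.2) * K p + f p.1 p.2 + ∫ z in p.2..p.1, K (p.1, z) * f z p.2) ∧
  (∀ x ∈ Icc (0:ℝ) 1, pd1 K (x, x) + pd2 K (x, x) = lam0 / 2) ∧
  (∀ x ∈ Icc (0:ℝ) 1, pd2 K (x, 0) = 0) ∧
  K (0, 0) = 0

/-- `f̄ := max_{[0,1]²} |f|`. -/
def fbar (f : ℝ → ℝ → ℝ) : ℝ :=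
  sSup ((fun p : ℝ × ℝ => |f p.1 p.2|) '' (Icc (0:ℝ) 1 ×ˢ Icc (0:ℝ) 1))

/-- `Λ̄ := max {λ0, max_D |λ0 - c1(x) + c1(y)|}`. -/
def Lambdabar (lam0 : ℝ) (c1 : ℝ → ℝ) : ℝ :=
  max lam0 (sSup ((fun p : ℝ × ℝ => |lam0 - c1 p.1 + c1 p.2|) '' Dset))

/-- `M := (f̄ + Λ̄)/2`. -/
def Mconst (lam0 : ℝ) (c1 : ℝ → ℝ) (f : ℝ → ℝ → ℝ) : ℝ :=
  (fbar f + Lambdabar lam0 c1) / 2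

open scoped Topology

/-! ### Groundwork -/

lemma mem_Dset {p : ℝ × ℝ} : p ∈ Dset ↔ 0 ≤ p.2 ∧ p.2 ≤ p.1 ∧ p.1 ≤ 1 := Iff.rfl

lemma isClosed_Dset : IsClosed Dset := by
  have : Dset = {p : ℝ × ℝ | 0 ≤ p.2} ∩ ({p | p.2 ≤ p.1} ∩ {p | p.1 ≤ 1}) := by
    ext p; simp [Dset, and_assoc]
  rw [this]
  exact (isClosed_le continuous_const continuous_snd).inter
    ((isClosed_le continuous_snd continuous_fst).inter (isClosed_le continuous_fst continuous_const))

lemma Dset_subset_square : Dset ⊆ (Icc (0:ℝ) 1 ×ˢ Icc (0:ℝ) 1) := by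
  rintro ⟨x, y⟩ ⟨h1, h2, h3⟩
  exact ⟨⟨le_trans h1 h2, h3⟩, ⟨h1, le_trans h2 h3⟩⟩

lemma isCompact_Dset : IsCompact Dset :=
  ((isCompact_Icc.prod isCompact_Icc).of_isClosed_subset isClosed_Dset Dset_subset_square)

lemma convex_Dset : Convex ℝ Dset := by
  rintro ⟨x1, y1⟩ ⟨h1, h2, h3⟩ ⟨x2, y2⟩ ⟨g1, g2, g3⟩ a b ha hb hab
  refine ⟨?_, ?_, ?_⟩ <;> simp only [Prod.smul_mk, Prod.mk_add_mk, smul_eq_mul] <;> nlinarith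

lemma interior_Dset_mem {p : ℝ × ℝ} (h1 : 0 < p.2) (h2 : p.2 < p.1) (h3 : p.1 < 1) :
    p ∈ interior Dset := by
  have hopen : IsOpen {q : ℝ × ℝ | 0 < q.2 ∧ q.2 < q.1 ∧ q.1 < 1} := by
    refine IsOpen.inter (isOpen_lt continuous_const continuous_snd) ?_
    exact (isOpen_lt continuous_snd continuous_fst).inter (isOpen_lt continuous_fst continuous_const)
  refine interior_maximal ?_ hopen ⟨h1, h2, h3⟩
  rintro ⟨x, y⟩ ⟨a1, a2, a3⟩
  exact ⟨a1.le, a2.le, a3.le⟩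

lemma uniqueDiffOn_Dset : UniqueDiffOn ℝ Dset :=
  uniqueDiffOn_convex convex_Dset ⟨((3:ℝ)/4, (1:ℝ)/4), interior_Dset_mem (by norm_num) (by norm_num) (by norm_num)⟩


/-! ### Constants -/

section consts
variable {lam0 : ℝ} {c1 : ℝ → ℝ} {f : ℝ → ℝ → ℝ}

lemma abs_f_le_fbar (hf : ContinuousOn (fun p : ℝ × ℝ => f p.1 p.2) (Icc 0 1 ×ˢ Icc 0 1))
    {p : ℝ × ℝ} (hp : p ∈ (Icc (0:ℝ) 1 ×ˢ Icc (0:ℝ) 1)) : |f p.1 p.2| ≤ fbar f := by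
  refine le_csSup ?_ (mem_image_of_mem _ hp)
  exact ((isCompact_Icc.prod isCompact_Icc).bddAbove_image hf.abs)

lemma fbar_nonneg (hf : ContinuousOn (fun p : ℝ × ℝ => f p.1 p.2) (Icc 0 1 ×ˢ Icc 0 1)) :
    0 ≤ fbar f :=
  le_trans (abs_nonneg _) (abs_f_le_fbar hf (p := ((0:ℝ), (0:ℝ)))
    (by constructor <;> exact ⟨le_refl _, zero_le_one⟩))

lemma lam0_le_Lambdabar : lam0 ≤ Lambdabar lam0 c1 := le_max_left _ _

lemma continuousOn_mu (hc1 : ContinuousOn c1 (Icc 0 1)) :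
    ContinuousOn (fun p : ℝ × ℝ => lam0 - c1 p.1 + c1 p.2) Dset := by
  have h1 : ContinuousOn (fun p : ℝ × ℝ => c1 p.1) Dset :=
    hc1.comp continuous_fst.continuousOn (fun p hp => (Dset_subset_square hp).1)
  have h2 : ContinuousOn (fun p : ℝ × ℝ => c1 p.2) Dset :=
    hc1.comp continuous_snd.continuousOn (fun p hp => (Dset_subset_square hp).2)
  exact (continuousOn_const.sub h1).add h2

lemma abs_mu_le_Lambdabar (hc1 : ContinuousOn c1 (Icc 0 1)) {p : ℝ × ℝ} (hp : p ∈ Dset) :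
    |lam0 - c1 p.1 + c1 p.2| ≤ Lambdabar lam0 c1 := by
  refine le_trans ?_ (le_max_right _ _)
  refine le_csSup (isCompact_Dset.bddAbove_image (continuousOn_mu hc1).abs) ?_
  exact mem_image_of_mem _ hp

lemma Lambdabar_pos (h : 0 < lam0) : 0 < Lambdabar lam0 c1 := lt_of_lt_of_le h lam0_le_Lambdabar

end consts

/-! ### Tietze extension helper -/

lemma exists_cont_ext {X : Type*} [TopologicalSpace X] [NormalSpace X] {s : Set X}
    (hs : IsClosed s) {g : X → ℝ} (hg : ContinuousOn g s) :
    ∃ G : X → ℝ, Continuous G ∧ ∀ p ∈ s, G p = g p := by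
  obtain ⟨G, hG⟩ := ContinuousMap.exists_restrict_eq hs
    (⟨s.restrict g, continuousOn_iff_continuous_restrict.mp hg⟩ : C(s, ℝ))
  exact ⟨G, G.continuous, fun p hp => ContinuousMap.congr_fun hG ⟨p, hp⟩⟩

/-! ### FTC helpers -/

lemma ftc_icc {g g' : ℝ → ℝ} {T : ℝ} (hT : 0 ≤ T)
    (hg : ContinuousOn g (Icc 0 T))
    (hd : ∀ t ∈ Ioo 0 T, HasDerivWithinAt g (g' t) (Icc 0 T) t)
    (hi : ContinuousOn g' (Icc 0 T)) :
    g T = g 0 + ∫ t in (0:ℝ)..T, g' t := by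
  have hint : IntervalIntegrable g' volume 0 T := by
    apply ContinuousOn.intervalIntegrable
    rwa [uIcc_of_le hT]
  have h := intervalIntegral.integral_eq_sub_of_hasDeriv_right_of_le hT hg
    (fun t ht => (hd t ht).mono_of_mem_nhdsWithin (Icc_mem_nhdsGT_of_mem ⟨ht.1.le, ht.2⟩))
    hint
  linarith

lemma hda_affine_exp (k m : ℝ) (t : ℝ) :
    HasDerivAt (fun t => Real.exp (k*(m+t))) (k * Real.exp (k*(m+t))) t := by
  have h : HasDerivAt (fun t : ℝ => k*(m+t)) k t := by
    simpa using ((hasDerivAt_id t).const_add m).const_mul k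
  simpa [mul_comm] using h.exp

lemma hda_piece (c k m : ℝ) (hk : k ≠ 0) (t : ℝ) :
    HasDerivAt (fun t => c/k*Real.exp (k*(m+t))) (c*Real.exp (k*(m+t))) t := by
  have h := (hda_affine_exp k m t).const_mul (c/k)
  refine h.congr_deriv ?_
  field_simp

lemma abs_intervalIntegral_le {T : ℝ} (hT : 0 ≤ T) {g G : ℝ → ℝ}
    (hg : ContinuousOn g (Icc 0 T)) (hG : ContinuousOn G (Icc 0 T))
    (hb : ∀ t ∈ Icc 0 T, |g t| ≤ G t) :
    |∫ t in (0:ℝ)..T, g t| ≤ ∫ t in (0:ℝ)..T, G t := by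
  have hgi : IntervalIntegrable g volume 0 T := by
    apply ContinuousOn.intervalIntegrable; rwa [uIcc_of_le hT]
  have hGi : IntervalIntegrable G volume 0 T := by
    apply ContinuousOn.intervalIntegrable; rwa [uIcc_of_le hT]
  calc |∫ t in (0:ℝ)..T, g t| ≤ ∫ t in (0:ℝ)..T, |g t| :=
        intervalIntegral.abs_integral_le_integral_abs hT
    _ ≤ ∫ t in (0:ℝ)..T, G t := by
        apply intervalIntegral.integral_mono_on hT hgi.abs hGi hb

lemma integral_eval (A B c₁ c₂ c₃ k₁ k₂ k₃ m₁ m₂ m₃ T : ℝ)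
    (h1 : k₁ ≠ 0) (h2 : k₂ ≠ 0) (h3 : k₃ ≠ 0) :
    ∫ t in (0:ℝ)..T, (A + B*t + c₁*Real.exp (k₁*(m₁+t)) + c₂*Real.exp (k₂*(m₂+t))
        + c₃*Real.exp (k₃*(m₃+t)))
    = A*T + B*T^2/2 + c₁/k₁*(Real.exp (k₁*(m₁+T)) - Real.exp (k₁*m₁))
      + c₂/k₂*(Real.exp (k₂*(m₂+T)) - Real.exp (k₂*m₂))
      + c₃/k₃*(Real.exp (k₃*(m₃+T)) - Real.exp (k₃*m₃)) := by
  have hF : ∀ t ∈ uIcc (0:ℝ) T, HasDerivAt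
      (fun t => A*t + B*(t^2)/2 + c₁/k₁*Real.exp (k₁*(m₁+t)) + c₂/k₂*Real.exp (k₂*(m₂+t))
        + c₃/k₃*Real.exp (k₃*(m₃+t)))
      (A + B*t + c₁*Real.exp (k₁*(m₁+t)) + c₂*Real.exp (k₂*(m₂+t))
        + c₃*Real.exp (k₃*(m₃+t))) t := by
    intro t _
    have hA : HasDerivAt (fun t : ℝ => A*t) A t := by simpa using (hasDerivAt_id t).const_mul A
    have hB : HasDerivAt (fun t : ℝ => B*(t^2)/2) (B*t) t := by
      have := ((hasDerivAt_pow 2 t).const_mul B).div_const 2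
      refine this.congr_deriv ?_
      ring
    exact (((hA.add hB).add (hda_piece c₁ k₁ m₁ h1 t)).add (hda_piece c₂ k₂ m₂ h2 t)).add
      (hda_piece c₃ k₃ m₃ h3 t)
  have hi : IntervalIntegrable (fun t => A + B*t + c₁*Real.exp (k₁*(m₁+t))
      + c₂*Real.exp (k₂*(m₂+t)) + c₃*Real.exp (k₃*(m₃+t))) volume 0 T := by
    apply Continuous.intervalIntegrable
    fun_prop
  rw [intervalIntegral.integral_eq_sub_of_hasDerivAt hF hi]
  ring

lemma exp_sub_one_le {z : ℝ} : Real.exp z - 1 ≤ z * Real.exp z := by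
  have h := Real.add_one_le_exp (-z)
  have h2 : Real.exp (-z) * Real.exp z = 1 := by
    rw [← Real.exp_add]; simp
  nlinarith [Real.exp_pos z]

lemma step2_poly {M x a b : ℝ} (hM : 0 < M) (hx0 : 0 ≤ x) (hx1 : x ≤ 1)
    (ha1 : 1 ≤ a) (hb1 : 1 ≤ b) (habl : 1 + 2*M*x ≤ a*b)
    (h5 : (a-1)*(b-1) ≤ M^2*x^2*(a*b)) :
    M*x + (b-1)*(a-1)/2 ≤ M*(a*b) := by
  rcases le_or_gt M 1 with hM1 | hM1
  · have h1c : (0:ℝ) ≤ 1 - M*x^2/2 := by nlinarith [mul_le_of_le_one_right hx0 hx1]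
    have key : (1+2*M*x)*(1 - M*x^2/2) ≤ a*b*(1 - M*x^2/2) :=
      mul_le_mul_of_nonneg_right habl h1c
    have key2 : x ≤ (1+2*M*x)*(1 - M*x^2/2) := by
      have f1 : M*x^2 ≤ M*x := by nlinarith [mul_le_of_le_one_right hx0 hx1]
      have f2 : M^2*x^3 ≤ M*x := by
        nlinarith [mul_le_of_le_one_right hx0 hx1, mul_nonneg hM.le hx0,
          mul_le_of_le_one_left (mul_nonneg hM.le hx0) hM1]
      nlinarith [mul_nonneg hM.le hx0]
    nlinarith [mul_le_mul_of_nonneg_left (le_trans key2 key) hM.le]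
  · have h6 : (a-1)*(b-1) ≤ a*b - 1 := by nlinarith
    have h7 : a*b ≤ M*(a*b) := by
      have : 0 ≤ (M-1)*(a*b) := mul_nonneg (by linarith) (by nlinarith)
      linarith
    linarith

lemma key_algebra {M lam0 fb h y : ℝ} (hM : 0 < M) (hlam : 0 < lam0) (hfb : 0 ≤ fb)
    (hsum : lam0 + fb ≤ 2*M) (hh : 0 ≤ h) (hy : 0 ≤ y) (hx1 : h + y ≤ 1) :
    lam0*(h+y)/2 + fb*(h^2 + 2*h*y)/4
      + (Real.exp (M*h) - 1)*(Real.exp (M*(h+2*y)) - 1)/2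
    ≤ M * Real.exp (2*M*(h+y)) := by
  set b := Real.exp (M*h) with hbdef
  set a := Real.exp (M*(h+2*y)) with hadef
  have hb1 : 1 ≤ b := Real.one_le_exp (by positivity)
  have ha1 : 1 ≤ a := Real.one_le_exp (by positivity)
  have hab : a * b = Real.exp (2*M*(h+y)) := by
    rw [hadef, hbdef, ← Real.exp_add]; ring_nf
  have habl : 1 + 2*M*(h+y) ≤ a*b := by
    rw [hab]; linarith [Real.add_one_le_exp (2*M*(h+y))]
  have ha2 : a - 1 ≤ M*(h+2*y)*a := by
    have := exp_sub_one_le (z := M*(h+2*y)); rwa [← hadef] at this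
  have hb2 : b - 1 ≤ M*h*b := by
    have := exp_sub_one_le (z := M*h); rwa [← hbdef] at this
  have hx0 : 0 ≤ h + y := add_nonneg hh hy
  have hq : h^2 + 2*h*y ≤ h + y := by nlinarith [sq_nonneg y, mul_le_of_le_one_right hx0 hx1]
  have step1 : lam0*(h+y)/2 + fb*(h^2 + 2*h*y)/4 ≤ M*(h+y) := by
    have h1 : fb*(h^2 + 2*h*y) ≤ fb*(h+y) := mul_le_mul_of_nonneg_left hq hfb
    nlinarith [mul_le_mul_of_nonneg_right (show 2*lam0 + fb ≤ 4*M by linarith) hx0]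
  have hab1 : (1:ℝ) ≤ a*b := by nlinarith
  have h5 : (a-1)*(b-1) ≤ M^2*(h+y)^2*(a*b) := by
    have hprod : (a-1)*(b-1) ≤ (M*(h+2*y)*a)*(M*h*b) :=
      mul_le_mul ha2 hb2 (by linarith) (by positivity)
    refine le_trans hprod ?_
    have heq : (M*(h+2*y)*a)*(M*h*b) = M^2*((h+2*y)*h)*(a*b) := by ring
    rw [heq]
    have hxx : (h+2*y)*h ≤ (h+y)^2 := by nlinarith
    have hMM : (0:ℝ) ≤ M^2*(a*b) := by positivity
    nlinarith [mul_le_mul_of_nonneg_left hxx hMM]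
  have step2 := step2_poly hM hx0 hx1 ha1 hb1 habl h5
  calc lam0*(h+y)/2 + fb*(h^2 + 2*h*y)/4 + (b - 1)*(a - 1)/2
      ≤ M*(h+y) + (b-1)*(a-1)/2 := by linarith
    _ ≤ M*(a*b) := step2
    _ = M * Real.exp (2*M*(h+y)) := by rw [hab]

/-! ### Derivative plumbing -/

def Vfun (K : ℝ × ℝ → ℝ) (p : ℝ × ℝ) : ℝ := fderivWithin ℝ K Dset p (1, 1)

lemma Vfun_eq_pd (K : ℝ × ℝ → ℝ) (p : ℝ × ℝ) : Vfun K p = pd1 K p + pd2 K p := by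
  have h : ((1:ℝ), (1:ℝ)) = ((1:ℝ), (0:ℝ)) + ((0:ℝ), (1:ℝ)) := by norm_num
  rw [Vfun, pd1, pd2, h, map_add]

section deriv
variable {K : ℝ × ℝ → ℝ}

lemma contDiffOn_F1 (hK : ContDiffOn ℝ 2 K Dset) :
    ContDiffOn ℝ 1 (fderivWithin ℝ K Dset) Dset :=
  hK.fderivWithin uniqueDiffOn_Dset (by norm_num)

lemma continuousOn_Vfun (hK : ContDiffOn ℝ 2 K Dset) : ContinuousOn (Vfun K) Dset :=
  (contDiffOn_F1 hK).continuousOn.clm_apply continuousOn_const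

lemma hasFDerivWithinAt_K (hK : ContDiffOn ℝ 2 K Dset) {p : ℝ × ℝ} (hp : p ∈ Dset) :
    HasFDerivWithinAt K (fderivWithin ℝ K Dset p) Dset p :=
  ((hK.differentiableOn (by norm_num)) p hp).hasFDerivWithinAt

lemma hasFDerivAt_V (hK : ContDiffOn ℝ 2 K Dset) {p : ℝ × ℝ} (hp : p ∈ interior Dset) :
    ∃ L : (ℝ × ℝ) →L[ℝ] ℝ, HasFDerivAt (Vfun K) L p ∧
      L ((1:ℝ), (-1:ℝ)) = pd1 (pd1 K) p - pd2 (pd2 K) p := by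
  have hmem : Dset ∈ 𝓝 p := mem_interior_iff_mem_nhds.mp hp
  set F1 := fderivWithin ℝ K Dset with hF1def
  have hF1cd : ContDiffAt ℝ 1 F1 p := (contDiffOn_F1 hK).contDiffAt hmem
  have hF1d : DifferentiableAt ℝ F1 p := hF1cd.differentiableAt one_ne_zero
  set DF1 := fderiv ℝ F1 p with hDF1def
  -- symmetry of second derivative
  have hev : ∀ᶠ q in 𝓝 p, HasFDerivAt K (F1 q) q := by
    filter_upwards [isOpen_interior.mem_nhds hp] with q hq
    have hqm : Dset ∈ 𝓝 q := mem_interior_iff_mem_nhds.mp hq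
    have hKq : DifferentiableAt ℝ K q :=
      (hK.contDiffAt hqm).differentiableAt (by norm_num)
    have : F1 q = fderiv ℝ K q := by rw [hF1def, fderivWithin_of_mem_nhds hqm]
    rw [this]
    exact hKq.hasFDerivAt
  have hsymm : ∀ v w : ℝ × ℝ, DF1 v w = DF1 w v :=
    second_derivative_symmetric_of_eventually hev hF1d.hasFDerivAt
  refine ⟨(ContinuousLinearMap.apply ℝ ℝ ((1:ℝ), (1:ℝ))).comp DF1, ?_, ?_⟩
  · exact (ContinuousLinearMap.apply ℝ ℝ ((1:ℝ), (1:ℝ))).hasFDerivAt.comp p hF1d.hasFDerivAt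
  · have e1 : pd1 (pd1 K) p = (DF1 ((1:ℝ), (0:ℝ))) ((1:ℝ), (0:ℝ)) := by
      have hcomp : HasFDerivAt (pd1 K)
          ((ContinuousLinearMap.apply ℝ ℝ ((1:ℝ), (0:ℝ))).comp DF1) p :=
        (ContinuousLinearMap.apply ℝ ℝ ((1:ℝ), (0:ℝ))).hasFDerivAt.comp p hF1d.hasFDerivAt
      show fderivWithin ℝ (pd1 K) Dset p ((1:ℝ), (0:ℝ)) = _
      rw [fderivWithin_of_mem_nhds hmem, hcomp.fderiv]
      rfl
    have e2 : pd2 (pd2 K) p = (DF1 ((0:ℝ), (1:ℝ))) ((0:ℝ), (1:ℝ)) := by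
      have hcomp : HasFDerivAt (pd2 K)
          ((ContinuousLinearMap.apply ℝ ℝ ((0:ℝ), (1:ℝ))).comp DF1) p :=
        (ContinuousLinearMap.apply ℝ ℝ ((0:ℝ), (1:ℝ))).hasFDerivAt.comp p hF1d.hasFDerivAt
      show fderivWithin ℝ (pd2 K) Dset p ((0:ℝ), (1:ℝ)) = _
      rw [fderivWithin_of_mem_nhds hmem, hcomp.fderiv]
      rfl
    have hv1 : ((1:ℝ), (-1:ℝ)) = ((1:ℝ), (0:ℝ)) - ((0:ℝ), (1:ℝ)) := by norm_num
    have hv2 : ((1:ℝ), (1:ℝ)) = ((1:ℝ), (0:ℝ)) + ((0:ℝ), (1:ℝ)) := by norm_num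
    show (DF1 ((1:ℝ), (-1:ℝ))) ((1:ℝ), (1:ℝ)) = _
    rw [hv1, map_sub]
    rw [ContinuousLinearMap.sub_apply]
    rw [hv2, map_add, map_add]
    rw [e1, e2, hsymm ((0:ℝ), (1:ℝ)) ((1:ℝ), (0:ℝ))]
    ring

end deriv

/-! ### The right-hand side Φ and its continuity -/

def Phi (lam0 : ℝ) (c1 : ℝ → ℝ) (f : ℝ → ℝ → ℝ) (K : ℝ × ℝ → ℝ) (p : ℝ × ℝ) : ℝ :=
  (lam0 - c1 p.1 + c1 p.2) * K p + f p.1 p.2 + ∫ z in p.2..p.1, K (p.1, z) * f z p.2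

section phi
variable {lam0 : ℝ} {c1 : ℝ → ℝ} {f : ℝ → ℝ → ℝ} {K : ℝ × ℝ → ℝ}

lemma continuousOn_Phi (hc1 : ContinuousOn c1 (Icc 0 1))
    (hf : ContinuousOn (fun p : ℝ × ℝ => f p.1 p.2) (Icc 0 1 ×ˢ Icc 0 1))
    (hKc : ContinuousOn K Dset) :
    ContinuousOn (Phi lam0 c1 f K) Dset := by
  obtain ⟨K', hK'c, hK'⟩ := exists_cont_ext isClosed_Dset hKc
  obtain ⟨F', hF'c, hF'⟩ := exists_cont_ext (isClosed_Icc.prod isClosed_Icc) hf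
  have hfD : ContinuousOn (fun p : ℝ × ℝ => f p.1 p.2) Dset := hf.mono Dset_subset_square
  have hI : ContinuousOn (fun p : ℝ × ℝ => ∫ z in p.2..p.1, K (p.1, z) * f z p.2) Dset := by
    have hG : Continuous (Function.uncurry
        (fun (p : ℝ × ℝ) (z : ℝ) => K' (p.1, z) * F' (z, p.2))) := by fun_prop
    have h1 : Continuous (fun p : ℝ × ℝ => ∫ z in (0:ℝ)..p.1, K' (p.1, z) * F' (z, p.2)) :=
      intervalIntegral.continuous_parametric_intervalIntegral_of_continuous hG continuous_fst
    have h2 : Continuous (fun p : ℝ × ℝ => ∫ z in (0:ℝ)..p.2, K' (p.1, z) * F' (z, p.2)) :=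
      intervalIntegral.continuous_parametric_intervalIntegral_of_continuous hG continuous_snd
    refine ContinuousOn.congr ((h1.sub h2).continuousOn) ?_
    rintro ⟨x, y⟩ ⟨hy0, hyx, hx1⟩
    have hg : Continuous (fun z => K' (x, z) * F' (z, y)) := by fun_prop
    have hsplit : (∫ z in (0:ℝ)..y, K' (x, z) * F' (z, y))
        + (∫ z in y..x, K' (x, z) * F' (z, y)) = ∫ z in (0:ℝ)..x, K' (x, z) * F' (z, y) :=
      intervalIntegral.integral_add_adjacent_intervals
        (hg.intervalIntegrable _ _) (hg.intervalIntegrable _ _)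
    have hcongr : (∫ z in y..x, K (x, z) * f z y) = ∫ z in y..x, K' (x, z) * F' (z, y) := by
      refine intervalIntegral.integral_congr ?_
      intro z hz
      rw [uIcc_of_le hyx] at hz
      have hzD : ((x : ℝ), z) ∈ Dset := ⟨le_trans hy0 hz.1, hz.2, hx1⟩
      have hzS : ((z : ℝ), y) ∈ (Icc (0:ℝ) 1 ×ˢ Icc (0:ℝ) 1) :=
        ⟨⟨le_trans hy0 hz.1, le_trans hz.2 hx1⟩, ⟨hy0, le_trans hyx hx1⟩⟩
      have e1 := hK' _ hzD
      have e2 := hF' _ hzS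
      simp only at e1 e2 ⊢
      rw [e1, e2]
    simp only [Pi.sub_apply]
    rw [hcongr]
    linarith [hsplit]
  refine ContinuousOn.add (ContinuousOn.add ?_ hfD) hI
  exact (continuousOn_mu hc1).mul hKc

end phi

/-! ### FTC results along characteristics -/

section ftcres
variable {lam0 : ℝ} {c1 : ℝ → ℝ} {f : ℝ → ℝ → ℝ} {K : ℝ × ℝ → ℝ}

lemma diag_eq (hK : ContDiffOn ℝ 2 K Dset)
    (h3 : ∀ x ∈ Icc (0:ℝ) 1, pd1 K (x, x) + pd2 K (x, x) = lam0 / 2)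
    (h5 : K (0, 0) = 0) :
    ∀ s ∈ Icc (0:ℝ) 1, K (s, s) = lam0 / 2 * s := by
  intro s hs
  have hmaps : MapsTo (fun r : ℝ => ((r:ℝ), (r:ℝ))) (Icc 0 s) Dset := by
    intro r hr
    exact ⟨hr.1, le_refl _, le_trans hr.2 hs.2⟩
  have hcont : ContinuousOn (fun r : ℝ => K (r, r)) (Icc 0 s) :=
    hK.continuousOn.comp (continuous_id.prodMk continuous_id).continuousOn hmaps
  have hd : ∀ r ∈ Ioo (0:ℝ) s, HasDerivWithinAt (fun r : ℝ => K (r, r)) (lam0/2) (Icc 0 s) r := by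
    intro r hr
    have hrD : ((r:ℝ), (r:ℝ)) ∈ Dset := hmaps ⟨hr.1.le, hr.2.le⟩
    have hpath : HasDerivWithinAt (fun r : ℝ => ((r:ℝ), (r:ℝ))) ((1:ℝ), (1:ℝ)) (Icc 0 s) r :=
      ((hasDerivAt_id r).prodMk (hasDerivAt_id r)).hasDerivWithinAt
    have hcomp := HasFDerivWithinAt.comp_hasDerivWithinAt_of_eq r
      (hasFDerivWithinAt_K hK hrD) hpath hmaps rfl
    have hval : fderivWithin ℝ K Dset (r, r) ((1:ℝ), (1:ℝ)) = lam0 / 2 := by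
      have := Vfun_eq_pd K (r, r)
      rw [Vfun] at this
      rw [this]
      exact h3 r ⟨hr.1.le, le_trans hr.2.le hs.2⟩
    rw [hval] at hcomp
    exact hcomp
  have := ftc_icc hs.1 hcont hd continuousOn_const
  rw [this, h5]
  simp [intervalIntegral.integral_const]
  ring

lemma edge_eq (hK : ContDiffOn ℝ 2 K Dset)
    (h4 : ∀ x ∈ Icc (0:ℝ) 1, pd2 K (x, 0) = 0)
    (h5 : K (0, 0) = 0) :
    ∀ x ∈ Icc (0:ℝ) 1, K (x, 0) = ∫ r in (0:ℝ)..x, Vfun K (r, 0) := by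
  intro x hx
  have hmaps : MapsTo (fun r : ℝ => ((r:ℝ), (0:ℝ))) (Icc 0 x) Dset := by
    intro r hr
    exact ⟨le_refl _, hr.1, le_trans hr.2 hx.2⟩
  have hcont : ContinuousOn (fun r : ℝ => K (r, 0)) (Icc 0 x) :=
    hK.continuousOn.comp (continuous_id.prodMk continuous_const).continuousOn hmaps
  have hd : ∀ r ∈ Ioo (0:ℝ) x,
      HasDerivWithinAt (fun r : ℝ => K (r, 0)) (Vfun K (r, 0)) (Icc 0 x) r := by
    intro r hr
    have hrD : ((r:ℝ), (0:ℝ)) ∈ Dset := hmaps ⟨hr.1.le, hr.2.le⟩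
    have hpath : HasDerivWithinAt (fun r : ℝ => ((r:ℝ), (0:ℝ))) ((1:ℝ), (0:ℝ)) (Icc 0 x) r :=
      ((hasDerivAt_id r).prodMk (hasDerivAt_const r 0)).hasDerivWithinAt
    have hcomp := HasFDerivWithinAt.comp_hasDerivWithinAt_of_eq r
      (hasFDerivWithinAt_K hK hrD) hpath hmaps rfl
    have hval : fderivWithin ℝ K Dset (r, 0) ((1:ℝ), (0:ℝ)) = Vfun K (r, 0) := by
      have h1 := Vfun_eq_pd K (r, 0)
      have h2 := h4 r ⟨hr.1.le, le_trans hr.2.le hx.2⟩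
      rw [h2, add_zero] at h1
      rw [h1]
      rfl
    rw [hval] at hcomp
    exact hcomp
  have hiC : ContinuousOn (fun r : ℝ => Vfun K (r, 0)) (Icc 0 x) :=
    (continuousOn_Vfun hK).comp (continuous_id.prodMk continuous_const).continuousOn hmaps
  have := ftc_icc hx.1 hcont hd hiC
  rw [this, h5, zero_add]

lemma path_eq (hK : ContDiffOn ℝ 2 K Dset) :
    ∀ p ∈ Dset, K p = K (p.1 - p.2, 0)
      + ∫ s in (0:ℝ)..p.2, Vfun K (p.1 - p.2 + s, s) := by
  rintro ⟨x, y⟩ ⟨hy0, hyx, hx1⟩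
  simp only at hy0 hyx hx1
  have hmaps : MapsTo (fun s : ℝ => ((x - y + s : ℝ), (s:ℝ))) (Icc 0 y) Dset := by
    intro s hsc
    exact ⟨hsc.1, by dsimp only; linarith [hsc.1], by dsimp only; linarith [hsc.2]⟩
  have hcont : ContinuousOn (fun s : ℝ => K (x - y + s, s)) (Icc 0 y) :=
    hK.continuousOn.comp ((continuous_const.add continuous_id).prodMk continuous_id).continuousOn
      hmaps
  have hd : ∀ s ∈ Ioo (0:ℝ) y,
      HasDerivWithinAt (fun s : ℝ => K (x - y + s, s)) (Vfun K (x - y + s, s)) (Icc 0 y) s := by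
    intro s hsc
    have hsD : ((x - y + s : ℝ), (s:ℝ)) ∈ Dset := hmaps ⟨hsc.1.le, hsc.2.le⟩
    have hpath : HasDerivWithinAt (fun s : ℝ => ((x - y + s : ℝ), (s:ℝ))) ((1:ℝ), (1:ℝ))
        (Icc 0 y) s :=
      ((((hasDerivAt_id s).const_add (x - y))).prodMk (hasDerivAt_id s)).hasDerivWithinAt
    exact HasFDerivWithinAt.comp_hasDerivWithinAt_of_eq s
      (hasFDerivWithinAt_K hK hsD) hpath hmaps rfl
  have hiC : ContinuousOn (fun s : ℝ => Vfun K (x - y + s, s)) (Icc 0 y) :=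
    (continuousOn_Vfun hK).comp
      ((continuous_const.add continuous_id).prodMk continuous_id).continuousOn hmaps
  have := ftc_icc hy0 hcont hd hiC
  simp only at this ⊢
  rw [show x - y + 0 = x - y by ring] at this
  rw [show (x, y) = (x - y + y, y) by rw [sub_add_cancel]]
  rw [this]

end ftcres

section vchar
variable {lam0 : ℝ} {c1 : ℝ → ℝ} {f : ℝ → ℝ → ℝ} {K : ℝ × ℝ → ℝ}

lemma Vchar (hK : ContDiffOn ℝ 2 K Dset)
    (hc1 : ContinuousOn c1 (Icc 0 1))
    (hf : ContinuousOn (fun p : ℝ × ℝ => f p.1 p.2) (Icc 0 1 ×ˢ Icc 0 1))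
    (h2 : ∀ p ∈ Dset, pd1 (pd1 K) p - pd2 (pd2 K) p = Phi lam0 c1 f K p)
    (h3 : ∀ x ∈ Icc (0:ℝ) 1, pd1 K (x, x) + pd2 K (x, x) = lam0 / 2) :
    ∀ p ∈ Dset, Vfun K p = lam0 / 2
      + ∫ t in (0:ℝ)..((p.1 - p.2)/2),
          Phi lam0 c1 f K ((p.1 + p.2)/2 + t, (p.1 + p.2)/2 - t) := by
  rintro ⟨a, b⟩ ⟨hb0, hba, ha1⟩
  simp only at hb0 hba ha1 ⊢
  set m := (a + b)/2 with hm
  set T := (a - b)/2 with hT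
  have hmT1 : m - T = b := by rw [hm, hT]; ring
  have hmT2 : m + T = a := by rw [hm, hT]; ring
  have hT0 : 0 ≤ T := by rw [hT]; linarith
  have hmaps : MapsTo (fun t : ℝ => ((m + t : ℝ), (m - t : ℝ))) (Icc 0 T) Dset := by
    intro t htc
    exact ⟨by simp only; linarith [htc.2], by simp only; linarith [htc.1],
      by simp only; linarith [htc.2]⟩
  have hpathc : Continuous (fun t : ℝ => ((m + t : ℝ), (m - t : ℝ))) :=
    (continuous_const.add continuous_id).prodMk (continuous_const.sub continuous_id)
  have hcont : ContinuousOn (fun t : ℝ => Vfun K (m + t, m - t)) (Icc 0 T) :=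
    (continuousOn_Vfun hK).comp hpathc.continuousOn hmaps
  have hiC : ContinuousOn (fun t : ℝ => Phi lam0 c1 f K (m + t, m - t)) (Icc 0 T) :=
    (continuousOn_Phi hc1 hf hK.continuousOn).comp hpathc.continuousOn hmaps
  have hd : ∀ t ∈ Ioo (0:ℝ) T,
      HasDerivWithinAt (fun t : ℝ => Vfun K (m + t, m - t))
        (Phi lam0 c1 f K (m + t, m - t)) (Icc 0 T) t := by
    intro t htc
    have hint : ((m + t : ℝ), (m - t : ℝ)) ∈ interior Dset :=
      interior_Dset_mem (by simp only; linarith [htc.2]) (by simp only; linarith [htc.1])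
        (by simp only; linarith [htc.2])
    obtain ⟨L, hL, hLval⟩ := hasFDerivAt_V hK hint
    have hpath : HasDerivAt (fun t : ℝ => ((m + t : ℝ), (m - t : ℝ))) ((1:ℝ), (-1:ℝ)) t := by
      have h1 : HasDerivAt (fun t : ℝ => m + t) 1 t := (hasDerivAt_id t).const_add m
      have h2' : HasDerivAt (fun t : ℝ => m - t) (-1) t := by
        simpa using (hasDerivAt_id t).const_sub m
      exact h1.prodMk h2'
    have hcomp : HasDerivAt (fun t : ℝ => Vfun K (m + t, m - t)) (L ((1:ℝ), (-1:ℝ))) t :=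
      (HasFDerivAt.comp_hasDerivAt t hL hpath :)
    have hmemD : ((m + t : ℝ), (m - t : ℝ)) ∈ Dset := interior_subset hint
    rw [hLval, h2 _ hmemD] at hcomp
    exact hcomp.hasDerivWithinAt
  have hftc := ftc_icc hT0 hcont hd hiC
  have hg0 : Vfun K (m + 0, m - 0) = lam0 / 2 := by
    rw [add_zero, sub_zero, Vfun_eq_pd]
    exact h3 m ⟨by linarith, by linarith⟩
  rw [hg0] at hftc
  have hend : ((m + T : ℝ), (m - T : ℝ)) = ((a : ℝ), (b : ℝ)) := by rw [hmT1, hmT2]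
  rw [hend] at hftc
  exact hftc

end vchar

/-! ### The key estimation step -/

section keystep
variable {lam0 : ℝ} {c1 : ℝ → ℝ} {f : ℝ → ℝ → ℝ} {K : ℝ × ℝ → ℝ} {Mc θ : ℝ}

lemma Phi_bound (hc1 : ContinuousOn c1 (Icc 0 1))
    (hf : ContinuousOn (fun p : ℝ × ℝ => f p.1 p.2) (Icc 0 1 ×ˢ Icc 0 1))
    (hM : 0 < Mc) (hML : fbar f + Lambdabar lam0 c1 ≤ 2*Mc) (hθ : 0 ≤ θ)
    (HB : ∀ q ∈ Dset, |K q| ≤ Mc*Real.exp (2*Mc*q.1) + θ*Real.exp (2*(Mc+1)*q.1)) :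
    ∀ q ∈ Dset, |Phi lam0 c1 f K q| ≤
      fbar f + 2*Mc*(Mc*Real.exp (2*Mc*q.1) + θ*Real.exp (2*(Mc+1)*q.1)) := by
  intro q hq
  have hfb0 : 0 ≤ fbar f := fbar_nonneg hf
  set B := Mc*Real.exp (2*Mc*q.1) + θ*Real.exp (2*(Mc+1)*q.1) with hB
  have hB0 : 0 ≤ B := by positivity
  have hsq := Dset_subset_square hq
  have hmu : |lam0 - c1 q.1 + c1 q.2| ≤ Lambdabar lam0 c1 := abs_mu_le_Lambdabar hc1 hq
  have hKqB : |K q| ≤ B := HB q hq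
  have hfq : |f q.1 q.2| ≤ fbar f := abs_f_le_fbar hf hsq
  have hq21 : q.2 ≤ q.1 := hq.2.1
  have hintB : |∫ z in q.2..q.1, K (q.1, z) * f z q.2| ≤ fbar f * B := by
    have hle : ∀ z ∈ Set.uIoc q.2 q.1, ‖K (q.1, z) * f z q.2‖ ≤ B * fbar f := by
      intro z hz
      rw [Set.uIoc_of_le hq21] at hz
      have hzD : ((q.1 : ℝ), z) ∈ Dset := ⟨le_trans hq.1 hz.1.le, hz.2, hq.2.2⟩
      have hzS : ((z:ℝ), q.2) ∈ (Icc (0:ℝ) 1 ×ˢ Icc (0:ℝ) 1) :=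
        ⟨⟨le_trans hq.1 hz.1.le, le_trans hz.2 hq.2.2⟩, ⟨hq.1, le_trans hq21 hq.2.2⟩⟩
      have hKz := HB _ hzD
      calc ‖K (q.1, z) * f z q.2‖ = |K (q.1, z)| * |f z q.2| := abs_mul _ _
        _ ≤ B * fbar f := mul_le_mul hKz (abs_f_le_fbar hf hzS) (abs_nonneg _) hB0
    have h1 := intervalIntegral.norm_integral_le_of_norm_le_const (C := B * fbar f) hle
    have h2 : |q.1 - q.2| ≤ 1 := by
      rw [abs_of_nonneg (by linarith)]
      linarith [hq.1, hq.2.2]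
    calc |∫ z in q.2..q.1, K (q.1, z) * f z q.2| ≤ B * fbar f * |q.1 - q.2| := h1
      _ ≤ fbar f * B := by nlinarith [mul_nonneg hB0 hfb0]
  have habs : |Phi lam0 c1 f K q| ≤ |lam0 - c1 q.1 + c1 q.2| * |K q| + |f q.1 q.2|
      + |∫ z in q.2..q.1, K (q.1, z) * f z q.2| := by
    rw [Phi, ← abs_mul]
    exact le_trans (abs_add_le _ _) (add_le_add_left (abs_add_le _ _) _)
  have hmuK : |lam0 - c1 q.1 + c1 q.2| * |K q| ≤ Lambdabar lam0 c1 * B :=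
    mul_le_mul hmu hKqB (abs_nonneg _) (le_trans (abs_nonneg _) hmu)
  nlinarith [mul_le_mul_of_nonneg_right hML hB0]

end keystep

section vbound
variable {lam0 : ℝ} {c1 : ℝ → ℝ} {f : ℝ → ℝ → ℝ} {K : ℝ × ℝ → ℝ} {Mc θ : ℝ}

lemma V_bound (hlam0 : 0 < lam0) (hc1 : ContinuousOn c1 (Icc 0 1))
    (hf : ContinuousOn (fun p : ℝ × ℝ => f p.1 p.2) (Icc 0 1 ×ˢ Icc 0 1))
    (hK : ContDiffOn ℝ 2 K Dset)
    (h2 : ∀ p ∈ Dset, pd1 (pd1 K) p - pd2 (pd2 K) p = Phi lam0 c1 f K p)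
    (h3 : ∀ x ∈ Icc (0:ℝ) 1, pd1 K (x, x) + pd2 K (x, x) = lam0 / 2)
    (hM : 0 < Mc) (hML : fbar f + Lambdabar lam0 c1 ≤ 2*Mc) (hθ : 0 ≤ θ)
    (HB : ∀ q ∈ Dset, |K q| ≤ Mc*Real.exp (2*Mc*q.1) + θ*Real.exp (2*(Mc+1)*q.1)) :
    ∀ q ∈ Dset, |Vfun K q| ≤ lam0/2 + fbar f*(q.1 - q.2)/2
      + Mc*Real.exp (2*Mc*q.1) - Mc*Real.exp (Mc*(q.1+q.2))
      + (2*Mc*θ/(2*(Mc+1)))*(Real.exp (2*(Mc+1)*q.1) - 1) := by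
  intro q hq
  obtain ⟨a, b⟩ := q
  obtain ⟨hb0, hba, ha1⟩ := hq
  simp only at hb0 hba ha1 ⊢
  have hqD : ((a:ℝ), (b:ℝ)) ∈ Dset := ⟨hb0, hba, ha1⟩
  set β := 2*(Mc+1) with hβdef
  have hβ0 : 0 < β := by rw [hβdef]; linarith
  set m := (a + b)/2 with hm
  set T := (a - b)/2 with hT
  have hmT1 : m - T = b := by rw [hm, hT]; ring
  have hmT2 : m + T = a := by rw [hm, hT]; ring
  have hT0 : 0 ≤ T := by rw [hT]; linarith
  have hrep := Vchar hK hc1 hf h2 h3 _ hqD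
  simp only at hrep
  rw [hrep]
  -- the majorant in `integral_eval` shape
  set G := fun t : ℝ => fbar f + 0*t + (2*Mc*Mc)*Real.exp ((2*Mc)*(m+t))
      + (2*Mc*θ)*Real.exp (β*(m+t)) + 0*Real.exp (1*(0+t)) with hG
  have hmaps : MapsTo (fun t : ℝ => ((m + t : ℝ), (m - t : ℝ))) (Icc 0 T) Dset := by
    intro t htc
    exact ⟨by simp only; linarith [htc.2], by simp only; linarith [htc.1],
      by simp only; linarith [htc.2]⟩
  have hpathc : Continuous (fun t : ℝ => ((m + t : ℝ), (m - t : ℝ))) :=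
    (continuous_const.add continuous_id).prodMk (continuous_const.sub continuous_id)
  have hPhiC : ContinuousOn (fun t : ℝ => Phi lam0 c1 f K (m + t, m - t)) (Icc 0 T) :=
    (continuousOn_Phi hc1 hf hK.continuousOn).comp hpathc.continuousOn hmaps
  have hGC : ContinuousOn G (Icc 0 T) := by
    rw [hG]; apply Continuous.continuousOn; fun_prop
  have hptw : ∀ t ∈ Icc (0:ℝ) T, |Phi lam0 c1 f K (m + t, m - t)| ≤ G t := by
    intro t htc
    have hb := Phi_bound hc1 hf hM hML hθ HB _ (hmaps htc)
    simp only at hb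
    rw [hG]
    have e1 : (2*Mc)*(m+t) = 2*Mc*(m+t) := by ring
    calc |Phi lam0 c1 f K (m + t, m - t)|
        ≤ fbar f + 2*Mc*(Mc*Real.exp (2*Mc*(m+t)) + θ*Real.exp (2*(Mc+1)*(m+t))) := hb
      _ = fbar f + 0*t + (2*Mc*Mc)*Real.exp ((2*Mc)*(m+t))
          + (2*Mc*θ)*Real.exp (β*(m+t)) + 0*Real.exp (1*(0+t)) := by
          rw [hβdef]; ring_nf
  have hIle : |∫ t in (0:ℝ)..T, Phi lam0 c1 f K (m + t, m - t)| ≤ ∫ t in (0:ℝ)..T, G t :=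
    abs_intervalIntegral_le hT0 hPhiC hGC hptw
  have hval : ∫ t in (0:ℝ)..T, G t = fbar f*T + 0*T^2/2
      + (2*Mc*Mc)/(2*Mc)*(Real.exp ((2*Mc)*(m+T)) - Real.exp ((2*Mc)*m))
      + (2*Mc*θ)/β*(Real.exp (β*(m+T)) - Real.exp (β*m))
      + 0/1*(Real.exp (1*(0+T)) - Real.exp (1*0)) := by
    rw [hG]
    exact integral_eval _ _ _ _ _ _ _ _ _ _ _ T (by positivity) (ne_of_gt hβ0) one_ne_zero
  have hcoef : (2*Mc*Mc)/(2*Mc) = Mc := by field_simp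
  have harg1 : (2*Mc)*(m+T) = 2*Mc*a := by rw [hmT2]
  have harg2 : (2*Mc)*m = Mc*(a+b) := by rw [hm]; ring
  have harg3 : β*(m+T) = β*a := by rw [hmT2]
  rw [hcoef, harg1, harg2, harg3] at hval
  have hm0 : 0 ≤ m := by rw [hm]; linarith
  have hexp1 : 1 ≤ Real.exp (β*m) := Real.one_le_exp (by positivity)
  have hc0 : 0 ≤ 2*Mc*θ/β := by positivity
  have habs : |lam0/2 + ∫ t in (0:ℝ)..T, Phi lam0 c1 f K (m + t, m - t)|
      ≤ lam0/2 + |∫ t in (0:ℝ)..T, Phi lam0 c1 f K (m + t, m - t)| := by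
    calc |lam0/2 + ∫ t in (0:ℝ)..T, Phi lam0 c1 f K (m + t, m - t)|
        ≤ |lam0/2| + |∫ t in (0:ℝ)..T, Phi lam0 c1 f K (m + t, m - t)| := abs_add_le _ _
      _ = lam0/2 + _ := by rw [abs_of_pos (by linarith)]
  have hTval : T = (a - b)/2 := hT
  have hfinal : ∫ t in (0:ℝ)..T, G t ≤ fbar f*(a-b)/2 + Mc*Real.exp (2*Mc*a)
      - Mc*Real.exp (Mc*(a+b)) + (2*Mc*θ/β)*(Real.exp (β*a) - 1) := by
    rw [hval, hTval]
    have := mul_le_mul_of_nonneg_left hexp1 hc0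
    nlinarith [this]
  calc |lam0/2 + ∫ t in (0:ℝ)..T, Phi lam0 c1 f K (m + t, m - t)|
      ≤ lam0/2 + ∫ t in (0:ℝ)..T, G t := by linarith
    _ ≤ lam0/2 + (fbar f*(a-b)/2 + Mc*Real.exp (2*Mc*a)
        - Mc*Real.exp (Mc*(a+b)) + (2*Mc*θ/β)*(Real.exp (β*a) - 1)) := by linarith
    _ = lam0/2 + fbar f*(a - b)/2 + Mc*Real.exp (2*Mc*a) - Mc*Real.exp (Mc*(a+b))
        + (2*Mc*θ/(2*(Mc+1)))*(Real.exp (2*(Mc+1)*a) - 1) := by rw [hβdef]; ring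

end vbound

section keymain
variable {lam0 : ℝ} {c1 : ℝ → ℝ} {f : ℝ → ℝ → ℝ} {K : ℝ × ℝ → ℝ} {Mc θ : ℝ}

lemma key_step (hlam0 : 0 < lam0) (hc1 : ContinuousOn c1 (Icc 0 1))
    (hf : ContinuousOn (fun p : ℝ × ℝ => f p.1 p.2) (Icc 0 1 ×ˢ Icc 0 1))
    (hK : ContDiffOn ℝ 2 K Dset)
    (h2 : ∀ p ∈ Dset, pd1 (pd1 K) p - pd2 (pd2 K) p = Phi lam0 c1 f K p)
    (h3 : ∀ x ∈ Icc (0:ℝ) 1, pd1 K (x, x) + pd2 K (x, x) = lam0 / 2)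
    (h4 : ∀ x ∈ Icc (0:ℝ) 1, pd2 K (x, 0) = 0)
    (h5 : K (0, 0) = 0)
    (hM : 0 < Mc) (hML : fbar f + Lambdabar lam0 c1 ≤ 2*Mc) (hθ : 0 ≤ θ)
    (HB : ∀ q ∈ Dset, |K q| ≤ Mc*Real.exp (2*Mc*q.1) + θ*Real.exp (2*(Mc+1)*q.1)) :
    ∀ p ∈ Dset, |K p| ≤ Mc*Real.exp (2*Mc*p.1) + θ/2*Real.exp (2*(Mc+1)*p.1) := by
  have hVb := V_bound hlam0 hc1 hf hK h2 h3 hM hML hθ HB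
  have hfb0 : 0 ≤ fbar f := fbar_nonneg hf
  have hlamM : lam0 + fbar f ≤ 2*Mc := by
    have := lam0_le_Lambdabar (lam0 := lam0) (c1 := c1)
    linarith
  rintro ⟨x, y⟩ ⟨hy0, hyx, hx1⟩
  simp only at hy0 hyx hx1 ⊢
  set β := 2*(Mc+1) with hβdef
  have hβ0 : 0 < β := by rw [hβdef]; linarith
  set cθ := 2*Mc*θ/β with hcθdef
  have hcθ0 : 0 ≤ cθ := by rw [hcθdef]; positivity
  set h := x - y with hh
  have hh0 : 0 ≤ h := by rw [hh]; linarith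
  have hhy : h + y = x := by rw [hh]; ring
  have hh1 : h ≤ 1 := by rw [hh]; linarith
  -- representation
  have hrep := path_eq hK (x, y) ⟨hy0, hyx, hx1⟩
  simp only at hrep
  have hedge := edge_eq hK h4 h5 h ⟨hh0, hh1⟩
  -- majorants in integral_eval shape
  set G0 := fun r : ℝ => (lam0/2 - cθ) + (fbar f/2)*r + Mc*Real.exp ((2*Mc)*(0+r))
      + (-Mc)*Real.exp (Mc*(0+r)) + cθ*Real.exp (β*(0+r)) with hG0
  set G1 := fun s : ℝ => (lam0/2 + fbar f*h/2 - cθ) + 0*s + Mc*Real.exp ((2*Mc)*(h+s))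
      + (-Mc)*Real.exp ((2*Mc)*(h/2+s)) + cθ*Real.exp (β*(h+s)) with hG1
  -- continuity of V along the two paths
  have hmaps0 : MapsTo (fun r : ℝ => ((r:ℝ), (0:ℝ))) (Icc 0 h) Dset :=
    fun r hr => ⟨le_refl _, hr.1, le_trans hr.2 hh1⟩
  have hmaps1 : MapsTo (fun s : ℝ => ((h + s : ℝ), (s:ℝ))) (Icc 0 y) Dset := by
    intro s hs
    exact ⟨hs.1, by simp only; linarith [hs.1], by simp only; linarith [hs.2]⟩
  have hV0C : ContinuousOn (fun r : ℝ => Vfun K (r, 0)) (Icc 0 h) :=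
    (continuousOn_Vfun hK).comp (continuous_id.prodMk continuous_const).continuousOn hmaps0
  have hV1C : ContinuousOn (fun s : ℝ => Vfun K (h + s, s)) (Icc 0 y) :=
    (continuousOn_Vfun hK).comp
      ((continuous_const.add continuous_id).prodMk continuous_id).continuousOn hmaps1
  have hG0C : ContinuousOn G0 (Icc 0 h) := by
    rw [hG0]; apply Continuous.continuousOn; fun_prop
  have hG1C : ContinuousOn G1 (Icc 0 y) := by
    rw [hG1]; apply Continuous.continuousOn; fun_prop
  -- pointwise bounds
  have hptw0 : ∀ r ∈ Icc (0:ℝ) h, |Vfun K (r, 0)| ≤ G0 r := by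
    intro r hr
    have hb := hVb (r, 0) (hmaps0 hr)
    simp only at hb
    rw [hG0]
    calc |Vfun K (r, 0)| ≤ lam0/2 + fbar f*(r - 0)/2 + Mc*Real.exp (2*Mc*r)
        - Mc*Real.exp (Mc*(r+0)) + (2*Mc*θ/(2*(Mc+1)))*(Real.exp (2*(Mc+1)*r) - 1) := hb
      _ = (lam0/2 - cθ) + (fbar f/2)*r + Mc*Real.exp ((2*Mc)*(0+r))
        + (-Mc)*Real.exp (Mc*(0+r)) + cθ*Real.exp (β*(0+r)) := by
          rw [hcθdef, hβdef]; ring_nf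
  have hptw1 : ∀ s ∈ Icc (0:ℝ) y, |Vfun K (h + s, s)| ≤ G1 s := by
    intro s hs
    have hb := hVb (h + s, s) (hmaps1 hs)
    simp only at hb
    rw [hG1]
    calc |Vfun K (h + s, s)| ≤ lam0/2 + fbar f*(h + s - s)/2 + Mc*Real.exp (2*Mc*(h+s))
        - Mc*Real.exp (Mc*(h+s+s)) + (2*Mc*θ/(2*(Mc+1)))*(Real.exp (2*(Mc+1)*(h+s)) - 1) := hb
      _ = (lam0/2 + fbar f*h/2 - cθ) + 0*s + Mc*Real.exp ((2*Mc)*(h+s))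
        + (-Mc)*Real.exp ((2*Mc)*(h/2+s)) + cθ*Real.exp (β*(h+s)) := by
          rw [hcθdef, hβdef]; ring_nf
  -- integral bounds
  have hb0 : |K (h, 0)| ≤ ∫ r in (0:ℝ)..h, G0 r := by
    rw [hedge]
    exact abs_intervalIntegral_le hh0 hV0C hG0C hptw0
  have hb1 : |∫ s in (0:ℝ)..y, Vfun K (h + s, s)| ≤ ∫ s in (0:ℝ)..y, G1 s :=
    abs_intervalIntegral_le hy0 hV1C hG1C hptw1
  -- evaluate the majorant integrals
  have hI0val : ∫ r in (0:ℝ)..h, G0 r = (lam0/2 - cθ)*h + (fbar f/2)*h^2/2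
      + Mc/(2*Mc)*(Real.exp ((2*Mc)*(0+h)) - Real.exp ((2*Mc)*0))
      + (-Mc)/Mc*(Real.exp (Mc*(0+h)) - Real.exp (Mc*0))
      + cθ/β*(Real.exp (β*(0+h)) - Real.exp (β*0)) := by
    rw [hG0]
    exact integral_eval _ _ _ _ _ _ _ _ _ _ _ h (by positivity) (ne_of_gt hM) (ne_of_gt hβ0)
  have hI1val : ∫ s in (0:ℝ)..y, G1 s = (lam0/2 + fbar f*h/2 - cθ)*y + 0*y^2/2
      + Mc/(2*Mc)*(Real.exp ((2*Mc)*(h+y)) - Real.exp ((2*Mc)*h))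
      + (-Mc)/(2*Mc)*(Real.exp ((2*Mc)*(h/2+y)) - Real.exp ((2*Mc)*(h/2)))
      + cθ/β*(Real.exp (β*(h+y)) - Real.exp (β*h)) := by
    rw [hG1]
    exact integral_eval _ _ _ _ _ _ _ _ _ _ _ y (by positivity) (by positivity) (ne_of_gt hβ0)
  -- canonicalize exponential arguments
  rw [show (2*Mc)*(0+h) = 2*Mc*h by ring, show (2*Mc)*0 = 0 by ring,
    show Mc*(0+h) = Mc*h by ring, show Mc*0 = 0 by ring,
    show β*(0+h) = β*h by ring, show β*0 = 0 by ring, Real.exp_zero] at hI0val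
  rw [show (2*Mc)*(h+y) = 2*Mc*(h+y) by ring, show (2*Mc)*h = 2*Mc*h by ring,
    show (2*Mc)*(h/2+y) = Mc*(h+2*y) by ring, show (2*Mc)*(h/2) = Mc*h by ring] at hI1val
  rw [show Mc/(2*Mc) = 1/2 by field_simp <;> ring, show (-Mc)/Mc = -1 by field_simp] at hI0val
  rw [show Mc/(2*Mc) = 1/2 by field_simp <;> ring,
    show (-Mc)/(2*Mc) = -(1/2) by field_simp <;> ring] at hI1val
  -- bridges between exponentials
  have hE2h : Real.exp (2*Mc*h) = Real.exp (Mc*h) * Real.exp (Mc*h) := by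
    rw [← Real.exp_add]; ring_nf
  have hEX : Real.exp (2*Mc*(h+y)) = Real.exp (Mc*h) * Real.exp (Mc*(h+2*y)) := by
    rw [← Real.exp_add]; ring_nf
  -- the θ-free part is bounded via `key_algebra`
  have halg := key_algebra hM hlam0 hfb0 hlamM hh0 hy0 (by linarith : h + y ≤ 1)
  -- θ-part facts
  have hcb : cθ/β ≤ θ/2 := by
    rw [hcθdef, div_div, div_le_iff₀ (by positivity : (0:ℝ) < β*β), hβdef]
    nlinarith [mul_nonneg hθ (mul_nonneg hM.le hM.le), mul_nonneg hθ hM.le]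
  -- fold `h` in the representation
  rw [← hh] at hrep
  have hKsplit : |K (x, y)| ≤ |K (h, 0)| + |∫ s in (0:ℝ)..y, Vfun K (h + s, s)| := by
    rw [hrep]; exact abs_add_le _ _
  -- final assembly
  rw [show 2*Mc*x = 2*Mc*(h+y) by rw [hhy], show β*x = β*(h+y) by rw [hhy]]
  have hid : 1/2*(Real.exp (Mc*h)*Real.exp (Mc*h) - 1) + (-1)*(Real.exp (Mc*h) - 1)
      + 1/2*(Real.exp (Mc*h)*Real.exp (Mc*(h+2*y)) - Real.exp (Mc*h)*Real.exp (Mc*h))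
      + (-(1/2))*(Real.exp (Mc*(h+2*y)) - Real.exp (Mc*h))
      = (Real.exp (Mc*h) - 1)*(Real.exp (Mc*(h+2*y)) - 1)/2 := by ring
  have hch : 0 ≤ cθ*h := mul_nonneg hcθ0 hh0
  have hcy : 0 ≤ cθ*y := mul_nonneg hcθ0 hy0
  have hcβ0 : 0 ≤ cθ/β := by positivity
  have hBxb : cθ/β*Real.exp (β*(h+y)) ≤ θ/2*Real.exp (β*(h+y)) :=
    mul_le_mul_of_nonneg_right hcb (Real.exp_pos _).le
  calc |K (x, y)| ≤ (∫ r in (0:ℝ)..h, G0 r) + ∫ s in (0:ℝ)..y, G1 s := by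
        linarith [hKsplit, hb0, hb1]
    _ ≤ Mc*Real.exp (2*Mc*(h+y)) + θ/2*Real.exp (β*(h+y)) := by
        rw [hEX] at halg
        rw [hI0val, hI1val, hE2h, hEX]
        clear_value cθ β h
        linarith [hid, halg, hch, hcy, hcβ0, hBxb]

end keymain

/-- Maximum estimate: any `C²` solution of the kernel equation satisfies
`|k(x,y)| ≤ M e^(2M)` on `D`, where `M = (f̄ + Λ̄)/2`. -/
theorem kernel_equation_bound (lam0 : ℝ) (hlam0 : 0 < lam0)
    (c1 : ℝ → ℝ) (hc1 : ContinuousOn c1 (Icc 0 1))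
    (f : ℝ → ℝ → ℝ)
    (hf : ContinuousOn (fun p : ℝ × ℝ => f p.1 p.2) (Icc 0 1 ×ˢ Icc 0 1))
    (K : ℝ × ℝ → ℝ) (hK : IsKernelSol lam0 c1 f K) :
    ∀ p ∈ Dset, |K p| ≤ Mconst lam0 c1 f * Real.exp (2 * Mconst lam0 c1 f) := by
  obtain ⟨hK1, hK2, hK3, hK4, hK5⟩ := hK
  set M := Mconst lam0 c1 f with hMdef
  have hfb0 : 0 ≤ fbar f := fbar_nonneg hf
  have hLpos : 0 < Lambdabar lam0 c1 := Lambdabar_pos hlam0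
  have hM : 0 < M := by rw [hMdef, Mconst]; linarith
  have hML : fbar f + Lambdabar lam0 c1 ≤ 2*M := by rw [hMdef, Mconst]; linarith
  have h2 : ∀ p ∈ Dset, pd1 (pd1 K) p - pd2 (pd2 K) p = Phi lam0 c1 f K p := hK2
  obtain ⟨C, hC⟩ := isCompact_Dset.exists_bound_of_continuousOn hK1.continuousOn
  set A := max C 0 with hA
  have hA0 : 0 ≤ A := le_max_right _ _
  have HB0 : ∀ q ∈ Dset, |K q| ≤ A := fun q hq => le_trans (hC q hq) (le_max_left _ _)
  have hind : ∀ n : ℕ, ∀ q ∈ Dset, |K q| ≤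
      M*Real.exp (2*M*q.1) + (A/2^n)*Real.exp (2*(M+1)*q.1) := by
    intro n
    induction n with
    | zero =>
      intro q hq
      have hq1 : 0 ≤ q.1 := le_trans hq.1 hq.2.1
      have he1 : 1 ≤ Real.exp (2*(M+1)*q.1) := Real.one_le_exp (by positivity)
      have : A ≤ A*Real.exp (2*(M+1)*q.1) := le_mul_of_one_le_right hA0 he1
      have hpos : 0 ≤ M*Real.exp (2*M*q.1) := by positivity
      simp only [pow_zero]
      calc |K q| ≤ A := HB0 q hq
        _ = 0 + A/1*Real.exp (2*(M+1)*q.1) - (A*Real.exp (2*(M+1)*q.1) - A) := by ring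
        _ ≤ M*Real.exp (2*M*q.1) + A/1*Real.exp (2*(M+1)*q.1) := by linarith
    | succ n ih =>
      have hstep := key_step hlam0 hc1 hf hK1 h2 hK3 hK4 hK5 hM hML
        (by positivity : (0:ℝ) ≤ A/2^n) ih
      intro q hq
      have := hstep q hq
      have harith : A/2^n/2 = A/2^(n+1) := by
        rw [pow_succ]; ring
      rwa [harith] at this
  intro p hp
  have hp1 : 0 ≤ p.1 := le_trans hp.1 hp.2.1
  have hlim : Filter.Tendsto
      (fun n : ℕ => M*Real.exp (2*M*p.1) + (A/2^n)*Real.exp (2*(M+1)*p.1))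
      Filter.atTop (nhds (M*Real.exp (2*M*p.1))) := by
    have h2n : Filter.Tendsto (fun n : ℕ => A/2^n) Filter.atTop (nhds 0) := by
      have hhalf : Filter.Tendsto (fun n : ℕ => ((1:ℝ)/2)^n) Filter.atTop (nhds 0) :=
        tendsto_pow_atTop_nhds_zero_of_lt_one (by norm_num) (by norm_num)
      have : (fun n : ℕ => A/2^n) = fun n : ℕ => A*((1:ℝ)/2)^n := by
        funext n; rw [div_pow, one_pow]; ring
      rw [this]
      simpa using hhalf.const_mul A
    have := (h2n.mul_const (Real.exp (2*(M+1)*p.1))).const_add (M*Real.exp (2*M*p.1))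
    simpa using this
  have hle : |K p| ≤ M*Real.exp (2*M*p.1) := ge_of_tendsto' hlim (fun n => hind n p hp)
  calc |K p| ≤ M*Real.exp (2*M*p.1) := hle
    _ ≤ M*Real.exp (2*M) := by
      apply mul_le_mul_of_nonneg_left ?_ hM.le
      apply Real.exp_le_exp.2
      nlinarith [hp.2.2]
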